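/- Let Σ be a forward-complete control system on ℝⁿ with input set 𝖴 ⊆ ℝᵐ given by f : ℝⁿ × 𝖴 → ℝⁿ. Suppose there exist a continuously differentiable function V : ℝⁿ × ℝⁿ → ℝ≥0, class 𝒦∞ functions α̲, ᾱ, σ, and a constant κ ∈ ℝ with κ ≠ 0 such that: (i) for all x, x′ ∈ ℝⁿ, α̲(‖x − x′‖) ≤ V(x, x′) ≤ ᾱ(‖x − x′‖); and (ii) for all x, x′ ∈ ℝⁿ and all u, u′ ∈ 𝖴, (∂V/∂x)(x,x′) · f(x,u) + (∂V/∂x′)(x,x′) · f(x′,u′) ≤ κ V(x,x′) + σ(‖u − u′‖). Then for every τ > 0, every pair of input curves υ, υ′ : [0,τ[ → 𝖴, every pair of initial states x, x′ ∈ ℝⁿ, and every t ∈ [0,τ], the corresponding trajectories satisfy ‖ξ_{xυ}(t) − ξ_{x′υ′}(t)‖ ≤ α̲⁻¹(2 e^{κt} ᾱ(‖x − x′‖)) + α̲⁻¹(2 ((e^{κt} − 1)/κ) σ(‖υ − υ′‖_∞)). In particular, Σ is incrementally forward complete with bounding functions β(r,t) = α̲⁻¹(2 e^{κt} ᾱ(r))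 and γ(r,t) = α̲⁻¹(2 ((e^{κt} − 1)/κ) σ(r)). -/

import Mathlib

open Set

/-- A class `𝒦∞` function `ℝ≥0 → ℝ≥0`, encoded as a function `ℝ → ℝ` restricted to `[0,∞)`:
continuous, strictly increasing, vanishing at `0`, and tending to `∞`. -/
def IsKInf (g : ℝ → ℝ) : Prop :=
  ContinuousOn g (Set.Ici 0) ∧ StrictMonoOn g (Set.Ici 0) ∧ g 0 = 0 ∧
    Filter.Tendsto g Filter.atTop Filter.atTop

open Filter Topology in
theorem antitone_of_deriv_nonpos_countable_aux {φ : ℝ → ℝ} {a b : ℝ} (hab : a ≤ b)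
    (hcont : ContinuousOn φ (Icc a b)) {s : Set ℝ} (hs : s.Countable)
    (hder : ∀ x ∈ Ioo a b, x ∉ s → ∃ d, HasDerivAt φ d x ∧ d ≤ 0) :
    φ b ≤ φ a := by
  -- it suffices to show `φ b ≤ φ a + ε * (b - a) + ε * 2` for every `ε > 0`
  have main : ∀ ε : ℝ, 0 < ε → φ b ≤ φ a + ε * (b - a) + ε * 2 := by
    intro ε hε
    -- enumerate `s ∪ {a}`
    obtain ⟨u, hu⟩ : ∃ u : ℕ → ℝ, s ∪ {a} = range u :=
      Set.Countable.exists_eq_range (hs.union (countable_singleton a)) ⟨a, by simp⟩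
    set w : ℕ → ℝ := fun n => ε * (1 / 2) ^ n with hw_def
    have hw_pos : ∀ n, 0 < w n := fun n => by positivity
    have hw_sum : Summable w := (summable_geometric_of_lt_one (by norm_num) (by norm_num)).mul_left ε
    have hw_tsum : ∑' n, w n = ε * 2 := by
      rw [tsum_mul_left, tsum_geometric_of_lt_one (by norm_num) (by norm_num)]
      norm_num
    set g : ℝ → ℕ → ℝ := fun x n => if u n < x then w n else 0 with hg_def
    have hg_nonneg : ∀ x n, 0 ≤ g x n := by
      intro x n; simp only [hg_def]; split_ifs
      · exact (hw_pos n).le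
      · exact le_rfl
    have hg_le : ∀ x n, g x n ≤ w n := by
      intro x n; simp only [hg_def]; split_ifs
      · exact le_rfl
      · exact (hw_pos n).le
    have hg_sum : ∀ x, Summable (g x) := fun x =>
      hw_sum.of_nonneg_of_le (hg_nonneg x) (hg_le x)
    set ψ : ℝ → ℝ := fun x => ∑' n, g x n with hψ_def
    have hψ_nonneg : ∀ x, 0 ≤ ψ x := fun x => tsum_nonneg (hg_nonneg x)
    have hψ_mono : Monotone ψ := by
      intro x y hxy
      refine Summable.tsum_le_tsum (fun n => ?_) (hg_sum x) (hg_sum y)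
      simp only [hg_def]
      split_ifs with h1 h2 h2
      · exact le_rfl
      · exact absurd (lt_of_lt_of_le h1 hxy) h2
      · exact (hw_pos n).le
      · exact le_rfl
    have hψ_le : ∀ x, ψ x ≤ ε * 2 := fun x =>
      (Summable.tsum_le_tsum (hg_le x) (hg_sum x) hw_sum).trans_eq hw_tsum
    have hψ_jump : ∀ n x, u n < x → ψ (u n) + w n ≤ ψ x := by
      intro n x hnx
      have hsub : Summable (fun m => g x m - g (u n) m) := (hg_sum x).sub (hg_sum (u n))
      have h1 : ψ x - ψ (u n) = ∑' m, (g x m - g (u n) m) :=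
        (Summable.tsum_sub (hg_sum x) (hg_sum (u n))).symm
      have h2 : w n ≤ ∑' m, (g x m - g (u n) m) := by
        have hterm : (fun m => g x m - g (u n) m) n = w n := by
          simp only [hg_def, if_pos hnx, if_neg (lt_irrefl (u n))]
          ring
        have hnn : ∀ m, 0 ≤ g x m - g (u n) m := by
          intro m
          simp only [hg_def, sub_nonneg]
          split_ifs with h1' h2' h2'
          · exact le_rfl
          · exact absurd (h1'.trans hnx) h2'
          · exact (hw_pos m).le
          · exact le_rfl
        calc w n = (fun m => g x m - g (u n) m) n := hterm.symm
          _ ≤ ∑' m, (g x m - g (u n) m) := Summable.le_tsum hsub n fun m _ => hnn m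
      linarith [h1 ▸ h2]
    -- the set where the bound holds
    set S : Set ℝ := {x | x ∈ Icc a b ∧ φ x ≤ φ a + ε * (x - a) + ψ x} with hS_def
    have haS : a ∈ S := by
      refine ⟨⟨le_rfl, hab⟩, ?_⟩
      have := hψ_nonneg a
      linarith
    have hS_ne : S.Nonempty := ⟨a, haS⟩
    have hS_bdd : BddAbove S := ⟨b, fun x hx => hx.1.2⟩
    set c := sSup S with hc_def
    have hac : a ≤ c := le_csSup hS_bdd haS
    have hcb : c ≤ b := csSup_le hS_ne fun x hx => hx.1.2
    have hc_Icc : c ∈ Icc a b := ⟨hac, hcb⟩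
    -- `c ∈ S`
    have hcS : c ∈ S := by
      refine ⟨hc_Icc, ?_⟩
      have hcl : c ∈ closure S := csSup_mem_closure hS_ne hS_bdd
      have hne : (𝓝[S] c).NeBot := mem_closure_iff_nhdsWithin_neBot.1 hcl
      have hφc : Filter.Tendsto φ (𝓝[S] c) (𝓝 (φ c)) :=
        ((hcont c hc_Icc).mono (fun x hx => hx.1)).tendsto
      refine le_of_tendsto hφc ?_
      filter_upwards [self_mem_nhdsWithin] with x hx
      have hxc : x ≤ c := le_csSup hS_bdd hx
      calc φ x ≤ φ a + ε * (x - a) + ψ x := hx.2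
        _ ≤ φ a + ε * (c - a) + ψ c := by
            have := hψ_mono hxc
            nlinarith
    -- `c = b`
    have hcb' : c = b := by
      by_contra hne'
      have hclt : c < b := lt_of_le_of_ne hcb hne'
      -- in either case we produce `x ∈ S` with `c < x`, contradicting `sSup`
      have hcontra : ∃ x ∈ S, c < x := by
        by_cases hcu : c ∈ s ∪ {a}
        · -- `c` is one of the enumerated points: use the jump of `ψ`
          obtain ⟨n, hn⟩ : ∃ n, u n = c := by
            rw [hu] at hcu; exact hcu.imp fun n h => h
          have hL : (𝓝[Ioc c b] c).NeBot := by
            apply mem_closure_iff_nhdsWithin_neBot.1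
            rw [closure_Ioc hclt.ne]
            exact ⟨le_rfl, hclt.le⟩
          have hsub : Ioc c b ⊆ Icc a b := fun y hy => ⟨hac.trans hy.1.le, hy.2⟩
          have hφt : Filter.Tendsto φ (𝓝[Ioc c b] c) (𝓝 (φ c)) :=
            ((hcont c hc_Icc).mono hsub).tendsto
          have hev : ∀ᶠ x in 𝓝[Ioc c b] c, φ x < φ c + w n :=
            hφt.eventually_lt_const (by linarith [hw_pos n])
          obtain ⟨x, hx1, hx2⟩ := (hev.and self_mem_nhdsWithin).exists
          refine ⟨x, ⟨hsub hx2, ?_⟩, hx2.1⟩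
          have hjump := hψ_jump n x (hn ▸ hx2.1)
          rw [hn] at hjump
          have := hcS.2
          have hcx : c ≤ x := hx2.1.le
          nlinarith
        · -- `c` is a point of differentiability
          have hca : a ≠ c := by
            intro h; exact hcu (Or.inr (by simp [h]))
          have hcs : c ∉ s := fun h => hcu (Or.inl h)
          have hcIoo : c ∈ Ioo a b := ⟨lt_of_le_of_ne hac hca, hclt⟩
          obtain ⟨d, hd, hd0⟩ := hder c hcIoo hcs
          have hslope : Filter.Tendsto (slope φ c) (𝓝[≠] c) (𝓝 d) :=
            hasDerivAt_iff_tendsto_slope.1 hd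
          have hslope' : Filter.Tendsto (slope φ c) (𝓝[>] c) (𝓝 d) :=
            hslope.mono_left (nhdsWithin_mono c fun y hy => ne_of_gt hy)
          have hev : ∀ᶠ x in 𝓝[>] c, slope φ c x < ε :=
            hslope'.eventually_lt_const (by linarith)
          have hev2 : Ioo c b ∈ 𝓝[>] c := Ioo_mem_nhdsGT_of_mem ⟨le_rfl, hclt⟩
          obtain ⟨x, hx1, hx2⟩ := (hev.and (eventually_of_mem hev2 fun y hy => hy)).exists
          have hcx : c < x := hx2.1
          have hxb : x < b := hx2.2
          have hφx : φ x ≤ φ c + ε * (x - c) := by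
            have := hx1
            rw [slope_def_field] at this
            have h' : (φ x - φ c) / (x - c) < ε := by
              rwa [div_eq_inv_mul] at this ⊢ <;> try ring_nf
            have := (div_lt_iff₀ (by linarith)).1 h'
            linarith
          refine ⟨x, ⟨⟨hac.trans hcx.le, hxb.le⟩, ?_⟩, hcx⟩
          have := hcS.2
          have hψcx := hψ_mono hcx.le
          nlinarith
      obtain ⟨x, hxS, hcx⟩ := hcontra
      exact absurd (le_csSup hS_bdd hxS) (not_le.2 hcx)
    have := hcS.2
    rw [hcb'] at this
    linarith [hψ_le b]
  -- conclude by letting `ε → 0`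
  refine le_of_forall_pos_le_add fun ε' hε' => ?_
  have hden : (0:ℝ) < b - a + 2 := by linarith
  have := main (ε' / (b - a + 2)) (by positivity)
  have h2 : ε' / (b - a + 2) * (b - a) + ε' / (b - a + 2) * 2 = ε' := by
    field_simp
  linarith


/-- If a control system `ẋ = f(x,u)`, `u ∈ U ⊆ ℝᵐ`, admits a `δ`-FC Lyapunov
function `V` (i.e. `V` is `C¹`, nonnegative, `α̲(‖x−x'‖) ≤ V(x,x') ≤ ᾱ(‖x−x'‖)` with `α̲, ᾱ`
class `𝒦∞`, and the derivative of `V` along any pair of vector fields `f(·,u), f(·,u')`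
satisfies `DV(x,x')·(f(x,u), f(x',u')) ≤ κ V(x,x') + σ(‖u−u'‖)` with `σ` class `𝒦∞`, `κ ≠ 0`),
then any two trajectories `ξ, ξ'` on `[0,τ]` with inputs `υ, υ'` valued in `U` satisfy, for all
`t ∈ [0,τ]` and any bound `c ≥ ‖υ − υ'‖_∞`:
`‖ξ(t) − ξ'(t)‖ ≤ α̲⁻¹(2 e^{κt} ᾱ(‖x−x'‖)) + α̲⁻¹(2 ((e^{κt}−1)/κ) σ(c))`;
i.e. `Σ` is `δ`-FC with `β(r,t) = α̲⁻¹(2 e^{κt} ᾱ(r))` and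
`γ(r,t) = α̲⁻¹(2 ((e^{κt}−1)/κ) σ(r))`. -/
theorem deltaFC_of_lyapunov {n m : ℕ}
    (U : Set (Fin m → ℝ))
    (f : (Fin n → ℝ) → (Fin m → ℝ) → (Fin n → ℝ))
    (V : ((Fin n → ℝ) × (Fin n → ℝ)) → ℝ)
    (hVnonneg : ∀ p, 0 ≤ V p)
    (hVsmooth : ContDiff ℝ 1 V)
    (αl αu σ : ℝ → ℝ) (αlinv : ℝ → ℝ) (κ : ℝ) (hκ : κ ≠ 0)
    (hαl : IsKInf αl) (hαu : IsKInf αu) (hσ : IsKInf σ)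
    (hinv₁ : ∀ r ∈ Ici (0:ℝ), αlinv (αl r) = r)
    (hinv₂ : ∀ r ∈ Ici (0:ℝ), αl (αlinv r) = r)
    (hinv₃ : ∀ r ∈ Ici (0:ℝ), αlinv r ∈ Ici (0:ℝ))
    (hsandwich : ∀ x x' : Fin n → ℝ,
      αl ‖x - x'‖ ≤ V (x, x') ∧ V (x, x') ≤ αu ‖x - x'‖)
    (hdecay : ∀ (x x' : Fin n → ℝ), ∀ u ∈ U, ∀ u' ∈ U,
      fderiv ℝ V (x, x') (f x u, f x' u') ≤ κ * V (x, x') + σ ‖u - u'‖)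
    -- trajectories on `[0,τ]` with inputs `υ, υ' : [0,τ[ → U`
    (τ : ℝ) (hτ : 0 < τ)
    (υ υ' : ℝ → (Fin m → ℝ))
    (hυ : ∀ t ∈ Ico 0 τ, υ t ∈ U) (hυ' : ∀ t ∈ Ico 0 τ, υ' t ∈ U)
    (x x' : Fin n → ℝ) (ξ ξ' : ℝ → (Fin n → ℝ))
    (hξ0 : ξ 0 = x) (hξ'0 : ξ' 0 = x')
    (hξcont : ContinuousOn ξ (Icc 0 τ)) (hξ'cont : ContinuousOn ξ' (Icc 0 τ))
    -- the ODE holds except on a countable set (the inputs are piecewise continuous)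
    (s : Set ℝ) (hs : s.Countable)
    (hξode : ∀ t ∈ Ioo 0 τ \ s, HasDerivAt ξ (f (ξ t) (υ t)) t)
    (hξ'ode : ∀ t ∈ Ioo 0 τ \ s, HasDerivAt ξ' (f (ξ' t) (υ' t)) t)
    (t : ℝ) (ht : t ∈ Icc 0 τ)
    -- `c` is an upper bound for `‖υ − υ'‖_∞` (in particular it may be taken equal to it)
    (c : ℝ) (hc0 : 0 ≤ c) (hc : ∀ r ∈ Ico 0 τ, ‖υ r - υ' r‖ ≤ c) :
    ‖ξ t - ξ' t‖ ≤
      αlinv (2 * Real.exp (κ * t) * αu ‖x - x'‖) +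
        αlinv (2 * ((Real.exp (κ * t) - 1) / κ) * σ c) := by
  have hσmono : MonotoneOn σ (Ici 0) := hσ.2.1.monotoneOn
  have hαumono : MonotoneOn αu (Ici 0) := hαu.2.1.monotoneOn
  have hσc0 : 0 ≤ σ c := by
    have := hσ.2.2.1
    have h := hσmono (self_mem_Ici) (mem_Ici.2 hc0) hc0
    linarith
  set K : ℝ := σ c / κ with hK_def
  set W : ℝ → ℝ := fun r => V (ξ r, ξ' r) with hW_def
  set φ : ℝ → ℝ := fun r => Real.exp (-κ * r) * (W r + K) with hφ_def
  -- continuity of φ on [0, τ]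
  have hWcont : ContinuousOn W (Icc 0 τ) :=
    hVsmooth.continuous.comp_continuousOn (hξcont.prodMk hξ'cont)
  have hφcont : ContinuousOn φ (Icc 0 τ) := by
    apply ContinuousOn.mul
    · exact (Real.continuous_exp.comp (continuous_const.mul continuous_id)).continuousOn
    · exact hWcont.add continuousOn_const
  -- derivative of φ off the countable set
  have hφder : ∀ r ∈ Ioo 0 t, r ∉ s → ∃ d, HasDerivAt φ d r ∧ d ≤ 0 := by
    intro r hr hrs
    have hrτ : r ∈ Ioo 0 τ \ s := ⟨⟨hr.1, lt_of_lt_of_le hr.2 ht.2⟩, hrs⟩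
    have hrIco : r ∈ Ico 0 τ := ⟨hrτ.1.1.le, hrτ.1.2⟩
    have hp : HasDerivAt (fun q => (ξ q, ξ' q))
        (f (ξ r) (υ r), f (ξ' r) (υ' r)) r := (hξode r hrτ).prodMk (hξ'ode r hrτ)
    have hV : HasFDerivAt V (fderiv ℝ V (ξ r, ξ' r)) (ξ r, ξ' r) :=
      ((hVsmooth.differentiable one_ne_zero) (ξ r, ξ' r)).hasFDerivAt
    have hWder : HasDerivAt W
        (fderiv ℝ V (ξ r, ξ' r) (f (ξ r) (υ r), f (ξ' r) (υ' r))) r :=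
      hV.comp_hasDerivAt r hp
    set W' : ℝ := fderiv ℝ V (ξ r, ξ' r) (f (ξ r) (υ r), f (ξ' r) (υ' r)) with hW'_def
    have hE : HasDerivAt (fun q => Real.exp (-κ * q)) (Real.exp (-κ * r) * (-κ)) r := by
      have h1 : HasDerivAt (fun q : ℝ => -κ * q) (-κ) r := by
        simpa using (hasDerivAt_id r).const_mul (-κ)
      exact h1.exp
    have hφ' : HasDerivAt φ
        (Real.exp (-κ * r) * (-κ) * (W r + K) + Real.exp (-κ * r) * W') r :=
      hE.mul (hWder.add_const K)
    refine ⟨_, hφ', ?_⟩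
    have hbound : W' ≤ κ * W r + σ c := by
      have h1 := hdecay (ξ r) (ξ' r) (υ r) (hυ r hrIco) (υ' r) (hυ' r hrIco)
      have h2 : σ ‖υ r - υ' r‖ ≤ σ c :=
        hσmono (mem_Ici.2 (norm_nonneg _)) (mem_Ici.2 hc0) (hc r hrIco)
      exact h1.trans (by linarith)
    have hexp : 0 < Real.exp (-κ * r) := Real.exp_pos _
    have hKκ : κ * K = σ c := by
      rw [hK_def]; field_simp
    nlinarith [hbound, hexp, hKκ]
  -- apply the comparison lemma on [0, t]
  have hφle : φ t ≤ φ 0 :=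
    antitone_of_deriv_nonpos_countable_aux ht.1
      (hφcont.mono (Icc_subset_Icc le_rfl ht.2)) hs hφder
  -- unfold the conclusion
  have hφ0 : φ 0 = W 0 + K := by simp [hφ_def]
  have hexp1 : Real.exp (κ * t) * Real.exp (-κ * t) = 1 := by
    rw [← Real.exp_add]; ring_nf; exact Real.exp_zero
  have hexppos : 0 < Real.exp (κ * t) := Real.exp_pos _
  have hWt : W t ≤ Real.exp (κ * t) * W 0 + (Real.exp (κ * t) - 1) * K := by
    have h1 : Real.exp (-κ * t) * (W t + K) ≤ W 0 + K := hφ0 ▸ hφle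
    have h2 := mul_le_mul_of_nonneg_left h1 hexppos.le
    rw [← mul_assoc, hexp1, one_mul] at h2
    nlinarith [h2]
  -- the two bounding terms
  set A : ℝ := Real.exp (κ * t) * αu ‖x - x'‖ with hA_def
  set B : ℝ := (Real.exp (κ * t) - 1) / κ * σ c with hB_def
  have hA0 : 0 ≤ A := by
    have h0 : αu 0 = 0 := hαu.2.2.1
    have := hαumono self_mem_Ici (mem_Ici.2 (norm_nonneg (x - x'))) (norm_nonneg _)
    have : 0 ≤ αu ‖x - x'‖ := by linarith
    rw [hA_def]
    exact mul_nonneg hexppos.le this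
  have hB0 : 0 ≤ B := by
    rcases hκ.lt_or_gt with hneg | hpos
    · have h1 : Real.exp (κ * t) ≤ 1 := by
        rw [← Real.exp_zero]
        exact Real.exp_le_exp.2 (mul_nonpos_of_nonpos_of_nonneg hneg.le ht.1)
      exact mul_nonneg (div_nonneg_iff.2 (Or.inr ⟨by linarith, hneg.le⟩)) hσc0
    · have h1 : 1 ≤ Real.exp (κ * t) := by
        rw [← Real.exp_zero]
        exact Real.exp_le_exp.2 (mul_nonneg hpos.le ht.1)
      exact mul_nonneg (div_nonneg (by linarith) hpos.le) hσc0
  have hαld : αl ‖ξ t - ξ' t‖ ≤ A + B := by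
    have h1 := (hsandwich (ξ t) (ξ' t)).1
    have h2 : W 0 ≤ αu ‖x - x'‖ := by
      have := (hsandwich x x').2
      simp only [hW_def, hξ0, hξ'0]
      exact this
    have h3 : (Real.exp (κ * t) - 1) * K = B := by
      rw [hB_def, hK_def]; ring
    have h4 : Real.exp (κ * t) * W 0 ≤ A := by
      rw [hA_def]; exact mul_le_mul_of_nonneg_left h2 hexppos.le
    calc αl ‖ξ t - ξ' t‖ ≤ W t := h1
      _ ≤ Real.exp (κ * t) * W 0 + (Real.exp (κ * t) - 1) * K := hWt
      _ ≤ A + B := by rw [h3] at *; linarith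
  -- final step: split according to which term dominates
  have key : ∀ D : ℝ, 0 ≤ D → αl ‖ξ t - ξ' t‖ ≤ 2 * D → ‖ξ t - ξ' t‖ ≤ αlinv (2 * D) := by
    intro D hD hle
    by_contra hgt
    push_neg at hgt
    have h2D : (2 : ℝ) * D ∈ Ici (0:ℝ) := mem_Ici.2 (by linarith)
    have hmem := hinv₃ _ h2D
    have := hαl.2.1 hmem (mem_Ici.2 (norm_nonneg _)) hgt
    rw [hinv₂ _ h2D] at this
    linarith
  have hgoal₁ : (2 : ℝ) * Real.exp (κ * t) * αu ‖x - x'‖ = 2 * A := by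
    rw [hA_def]; ring
  have hgoal₂ : (2 : ℝ) * ((Real.exp (κ * t) - 1) / κ) * σ c = 2 * B := by
    rw [hB_def]; ring
  rw [hgoal₁, hgoal₂]
  rcases le_total A B with hAB | hAB
  · have h1 : αl ‖ξ t - ξ' t‖ ≤ 2 * B := by linarith
    have h2 := key B hB0 h1
    have h3 : 0 ≤ αlinv (2 * A) := hinv₃ _ (mem_Ici.2 (by linarith))
    linarith
  · have h1 : αl ‖ξ t - ξ' t‖ ≤ 2 * A := by linarith
    have h2 := key A hA0 h1
    have h3 : 0 ≤ αlinv (2 * B) := hinv₃ _ (mem_Ici.2 (by linarith))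
    linarith
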